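/- arXiv:2601.11241 — 2 statements merged into one kernel-verified Lean document; each statement's English description precedes it below -/
import Mathlib

section
/- For s ∈ (0, 1), let c_s = 2^{1+2s} C_{1,s} P.V. ∫_{−∞}^{+∞} z e^{(1/2−s)z} |sinh(z/2)|^{−(1+2s)} dz. Then c_s > 0 for s ∈ (0, 1/2), c_{1/2} = 0, and c_s < 0 for s ∈ (1/2, 1). -/
open Filter MeasureTheory Metric Set Topology

noncomputable section

/-- The standard normalizing constant of the fractional Laplacian on ℝ. -/
noncomputable def C1s (s : ℝ) : ℝ :=
  4 ^ s * Real.Gamma ((1 : ℝ) / 2 + s) / (Real.pi ^ ((1 : ℝ) / 2) * |Real.Gamma (-s)|)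

/-- The constant `c_s = 2^{1+2s} C_{1,s} P.V.∫ z e^{(1/2−s)z} |sinh(z/2)|^{−(1+2s)} dz`. -/
noncomputable def csConst (s : ℝ) : ℝ :=
  2 ^ (1 + 2 * s) * C1s s *
    limUnder (nhdsWithin (0 : ℝ) (Set.Ioi 0))
      (fun ε : ℝ => ∫ z in {z : ℝ | ε < |z|},
        z * Real.exp ((1 / 2 - s) * z) / |Real.sinh (z / 2)| ^ (1 + 2 * s))

namespace CsAux

/-- The integrand of the principal value integral. -/
def fFun (s : ℝ) (z : ℝ) : ℝ :=
  z * Real.exp ((1 / 2 - s) * z) / |Real.sinh (z / 2)| ^ (1 + 2 * s)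

/-- The symmetrized integrand. -/
def gFun (s : ℝ) (z : ℝ) : ℝ :=
  2 * z * Real.sinh ((1 / 2 - s) * z) / |Real.sinh (z / 2)| ^ (1 + 2 * s)

lemma sinh_le_mul_exp {t : ℝ} (ht : 0 ≤ t) : Real.sinh t ≤ t * Real.exp t := by
  rw [Real.sinh_eq]
  have h1 : -(2 * t) + 1 ≤ Real.exp (-(2 * t)) := Real.add_one_le_exp _
  have h2 : Real.exp (-t) = Real.exp t * Real.exp (-(2 * t)) := by
    rw [← Real.exp_add]; ring_nf
  have h3 := Real.exp_pos t
  nlinarith [Real.exp_pos (-(2 * t))]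

lemma measurable_fFun (b p : ℝ) :
    Measurable fun z : ℝ => z * Real.exp (b * z) / |Real.sinh (z / 2)| ^ p := by
  apply Measurable.div
  · exact measurable_id.mul ((measurable_const.mul measurable_id).exp)
  · exact ((Real.continuous_sinh.measurable.comp (measurable_id.div_const 2)).abs).pow_const _

lemma measurable_gFun (s : ℝ) : Measurable (gFun s) := by
  apply Measurable.div
  · exact (measurable_const.mul measurable_id).mul
      (Real.continuous_sinh.measurable.comp (measurable_const.mul measurable_id))
  · exact ((Real.continuous_sinh.measurable.comp (measurable_id.div_const 2)).abs).pow_const _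

/-- Main integrability estimate away from the origin. -/
lemma integrableOn_aux {p b ε : ℝ} (hp : 0 < p) (hε : 0 < ε) (hb : b < p / 2) :
    IntegrableOn (fun z : ℝ => z * Real.exp (b * z) / |Real.sinh (z / 2)| ^ p) (Ioi ε) := by
  set k : ℝ := p / 2 - b with hk
  have hk0 : 0 < k := by simp only [hk]; linarith
  set c : ℝ := (1 - Real.exp (-ε)) / 2 with hc
  have hc0 : 0 < c := by
    have : Real.exp (-ε) < 1 := Real.exp_lt_one_iff.2 (by linarith)
    simp only [hc]; linarith
  apply Integrable.mono' (g := fun z : ℝ => c ^ (-p) * (2 / k) * Real.exp (-(k / 2) * z))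
  · exact ((exp_neg_integrableOn_Ioi ε (by positivity : (0:ℝ) < k / 2)).const_mul _)
  · exact (measurable_fFun b p).aestronglyMeasurable
  · rw [ae_restrict_iff' measurableSet_Ioi]
    filter_upwards with z hz
    have hz0 : 0 < z := hε.trans hz
    have hsz : 0 < Real.sinh (z / 2) := Real.sinh_pos_iff.2 (by positivity)
    have hlow : c * Real.exp (z / 2) ≤ Real.sinh (z / 2) := by
      rw [Real.sinh_eq]
      have h1 : Real.exp (-z) ≤ Real.exp (-ε) := Real.exp_le_exp.2 (by linarith [(show ε < z from hz).le])
      have h2 : Real.exp (-(z / 2)) = Real.exp (z / 2) * Real.exp (-z) := by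
        rw [← Real.exp_add]; ring_nf
      rw [h2, hc]
      nlinarith [Real.exp_pos (z / 2)]
    have hzk : z ≤ 2 / k * Real.exp (k / 2 * z) := by
      have h1 : k / 2 * z + 1 ≤ Real.exp (k / 2 * z) := Real.add_one_le_exp _
      have h2 : k / 2 * z ≤ Real.exp (k / 2 * z) := by linarith
      calc z = 2 / k * (k / 2 * z) := by field_simp
        _ ≤ 2 / k * Real.exp (k / 2 * z) := by
            apply mul_le_mul_of_nonneg_left h2 (by positivity)
    have habs : |Real.sinh (z / 2)| = Real.sinh (z / 2) := abs_of_pos hsz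
    have hexp2 : (Real.exp (z / 2)) ^ p = Real.exp (z / 2 * p) := (Real.exp_mul _ _).symm
    rw [Real.norm_eq_abs, abs_div, abs_of_pos (by positivity : 0 < z * Real.exp (b * z)),
      abs_of_nonneg (Real.rpow_nonneg (abs_nonneg _) p), habs]
    have hden : (c * Real.exp (z / 2)) ^ p ≤ Real.sinh (z / 2) ^ p :=
      Real.rpow_le_rpow (by positivity) hlow hp.le
    have hdenpos : (0:ℝ) < (c * Real.exp (z / 2)) ^ p := Real.rpow_pos_of_pos (by positivity) _
    calc z * Real.exp (b * z) / Real.sinh (z / 2) ^ p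
        ≤ z * Real.exp (b * z) / (c * Real.exp (z / 2)) ^ p := by
          apply div_le_div_of_nonneg_left (by positivity) hdenpos hden
      _ ≤ (2 / k * Real.exp (k / 2 * z)) * Real.exp (b * z) / (c * Real.exp (z / 2)) ^ p := by
          gcongr
      _ = c ^ (-p) * (2 / k) * Real.exp (-(k / 2) * z) := by
          have hcp : (0:ℝ) < c ^ p := Real.rpow_pos_of_pos hc0 _
          have hee : Real.exp (k / 2 * z) * Real.exp (b * z) =
              Real.exp (-(k / 2) * z) * Real.exp (z / 2 * p) := by
            rw [← Real.exp_add, ← Real.exp_add]; congr 1; rw [hk]; ring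
          have hnum : (2 / k * Real.exp (k / 2 * z)) * Real.exp (b * z) =
              2 / k * (Real.exp (-(k / 2) * z) * Real.exp (z / 2 * p)) := by
            rw [mul_assoc, hee]
          rw [Real.mul_rpow hc0.le (Real.exp_pos _).le, hexp2, Real.rpow_neg hc0.le, hnum]
          have hE2 : Real.exp (z / 2 * p) ≠ 0 := (Real.exp_pos _).ne'
          have hcp' : c ^ p ≠ 0 := hcp.ne'
          have hkne : k ≠ 0 := hk0.ne'
          field_simp

variable {s : ℝ}

lemma hb1 (hs : s ∈ Ioo (0:ℝ) 1) : (1 / 2 - s) < (1 + 2 * s) / 2 := by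
  have := hs.1; linarith

lemma hb2 (hs : s ∈ Ioo (0:ℝ) 1) : (s - 1 / 2) < (1 + 2 * s) / 2 := by linarith

lemma hp0 (hs : s ∈ Ioo (0:ℝ) 1) : (0:ℝ) < 1 + 2 * s := by have := hs.1; linarith

lemma fFun_neg (z : ℝ) :
    fFun s (-z) = -(z * Real.exp ((s - 1 / 2) * z) / |Real.sinh (z / 2)| ^ (1 + 2 * s)) := by
  unfold fFun
  have h1 : (1 / 2 - s) * (-z) = (s - 1 / 2) * z := by ring
  have h2 : -z / 2 = -(z / 2) := by ring
  rw [h1, h2, Real.sinh_neg, abs_neg, neg_mul, neg_div]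

lemma integrableOn_f (hs : s ∈ Ioo (0:ℝ) 1) {ε : ℝ} (hε : 0 < ε) :
    IntegrableOn (fFun s) (Ioi ε) :=
  integrableOn_aux (hp0 hs) hε (hb1 hs)

lemma integrableOn_f_neg (hs : s ∈ Ioo (0:ℝ) 1) {ε : ℝ} (hε : 0 < ε) :
    IntegrableOn (fun z => fFun s (-z)) (Ioi ε) := by
  have : (fun z : ℝ => fFun s (-z)) =
      fun z => -(z * Real.exp ((s - 1 / 2) * z) / |Real.sinh (z / 2)| ^ (1 + 2 * s)) :=
    funext fun z => fFun_neg z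
  rw [this]
  exact (integrableOn_aux (hp0 hs) hε (hb2 hs)).neg

lemma fFun_add_neg (z : ℝ) : fFun s (-z) + fFun s z = gFun s z := by
  rw [fFun_neg]
  unfold fFun gFun
  rw [← neg_div, ← add_div]
  congr 1
  rw [Real.sinh_eq, show (s - 1 / 2) * z = -((1 / 2 - s) * z) by ring]
  ring

lemma integrableOn_f_left (hs : s ∈ Ioo (0:ℝ) 1) {ε : ℝ} (hε : 0 < ε) :
    IntegrableOn (fFun s) (Iio (-ε)) := by
  refine ((Measure.measurePreserving_neg (volume : Measure ℝ)).integrableOn_comp_preimage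
    (Homeomorph.neg ℝ).measurableEmbedding (f := fFun s) (s := Iio (-ε))).mp ?_
  have hset : (fun z : ℝ => -z) ⁻¹' Iio (-ε) = Ioi ε := by
    ext z; simp [neg_lt_neg_iff]
  simpa [Function.comp_def, hset] using integrableOn_f_neg hs hε

lemma split_integral (hs : s ∈ Ioo (0:ℝ) 1) {ε : ℝ} (hε : 0 < ε) :
    ∫ z in {z : ℝ | ε < |z|}, fFun s z = ∫ z in Ioi ε, gFun s z := by
  have hset : {z : ℝ | ε < |z|} = Iio (-ε) ∪ Ioi ε := by
    ext z
    simp only [mem_setOf_eq, lt_abs, mem_union, mem_Iio, mem_Ioi, lt_neg]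
    tauto
  have hdisj : Disjoint (Iio (-ε)) (Ioi ε) := by
    apply Set.disjoint_left.2
    intro z hz1 hz2
    simp only [mem_Iio] at hz1
    simp only [mem_Ioi] at hz2
    linarith
  rw [hset, setIntegral_union hdisj measurableSet_Ioi (integrableOn_f_left hs hε)
    (integrableOn_f hs hε)]
  rw [← integral_Iic_eq_integral_Iio, ← integral_comp_neg_Ioi]
  rw [← integral_add (integrableOn_f_neg hs hε) (integrableOn_f hs hε)]
  exact integral_congr_ae (Filter.Eventually.of_forall fun z => fFun_add_neg z)

lemma integrableOn_g_Ioc (hs : s ∈ Ioo (0:ℝ) 1) : IntegrableOn (gFun s) (Ioc 0 1) := by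
  have hs1 := hs.1
  have hs2 := hs.2
  apply Integrable.mono'
    (g := fun z : ℝ => Real.exp (1 / 2) * 2 ^ (1 + 2 * s) * z ^ (2 - (1 + 2 * s)))
  · have hr : (-1:ℝ) < 2 - (1 + 2 * s) := by linarith
    have := (intervalIntegral.intervalIntegrable_rpow' (a := 0) (b := 1) hr)
    exact ((intervalIntegrable_iff_integrableOn_Ioc_of_le (by norm_num)).1 this).const_mul _
  · exact (measurable_gFun s).aestronglyMeasurable
  · rw [ae_restrict_iff' measurableSet_Ioc]
    filter_upwards with z hz
    obtain ⟨hz0, hz1⟩ := hz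
    have hsz : 0 < Real.sinh (z / 2) := Real.sinh_pos_iff.2 (by positivity)
    have habs : |Real.sinh (z / 2)| = Real.sinh (z / 2) := abs_of_pos hsz
    have hsinh_num : |Real.sinh ((1 / 2 - s) * z)| ≤ z / 2 * Real.exp (1 / 2) := by
      rw [Real.abs_sinh]
      have h1 : |(1 / 2 - s) * z| ≤ z / 2 := by
        rw [abs_mul, abs_of_pos hz0]
        have : |1 / 2 - s| ≤ 1 / 2 := by
          rw [abs_le]; constructor <;> linarith
        nlinarith
      calc Real.sinh |(1 / 2 - s) * z|
          ≤ |(1 / 2 - s) * z| * Real.exp |(1 / 2 - s) * z| :=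
            sinh_le_mul_exp (abs_nonneg _)
        _ ≤ z / 2 * Real.exp (1 / 2) := by
            apply mul_le_mul h1 (Real.exp_le_exp.2 (by linarith)) (Real.exp_pos _).le
              (by linarith)
    have hlow : z / 2 ≤ Real.sinh (z / 2) := (Real.self_lt_sinh_iff.2 (by positivity)).le
    have hdpos : (0:ℝ) < (z / 2) ^ (1 + 2 * s) := Real.rpow_pos_of_pos (by positivity) _
    have hden : (z / 2) ^ (1 + 2 * s) ≤ Real.sinh (z / 2) ^ (1 + 2 * s) :=
      Real.rpow_le_rpow (by positivity) hlow (hp0 hs).le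
    rw [Real.norm_eq_abs]
    unfold gFun
    rw [abs_div, abs_of_nonneg (Real.rpow_nonneg (abs_nonneg _) _), habs, abs_mul,
      abs_of_pos (by positivity : (0:ℝ) < 2 * z)]
    calc 2 * z * |Real.sinh ((1 / 2 - s) * z)| / Real.sinh (z / 2) ^ (1 + 2 * s)
        ≤ 2 * z * (z / 2 * Real.exp (1 / 2)) / (z / 2) ^ (1 + 2 * s) := by
          apply div_le_div₀ (by positivity)
            (mul_le_mul_of_nonneg_left hsinh_num (by positivity)) hdpos hden
      _ = Real.exp (1 / 2) * 2 ^ (1 + 2 * s) * z ^ (2 - (1 + 2 * s)) := by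
          rw [Real.div_rpow hz0.le (by norm_num : (0:ℝ) ≤ 2), Real.rpow_sub hz0]
          have hz2 : z ^ (2:ℝ) = z * z := by
            rw [show (2:ℝ) = ((2:ℕ):ℝ) by norm_num, Real.rpow_natCast]; ring
          have h2p : (0:ℝ) < (2:ℝ) ^ (1 + 2 * s) := Real.rpow_pos_of_pos (by norm_num) _
          have hzp : (0:ℝ) < z ^ (1 + 2 * s) := Real.rpow_pos_of_pos hz0 _
          rw [hz2]
          field_simp

lemma integrableOn_g (hs : s ∈ Ioo (0:ℝ) 1) : IntegrableOn (gFun s) (Ioi 0) := by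
  have h1 : IntegrableOn (gFun s) (Ioi 1) := by
    have := (integrableOn_f_neg hs one_pos).add (integrableOn_f hs one_pos)
    exact this.congr (Filter.Eventually.of_forall fun z => fFun_add_neg z)
  have := (integrableOn_g_Ioc hs).union h1
  rwa [Ioc_union_Ioi_eq_Ioi (by norm_num : (0:ℝ) ≤ 1)] at this

lemma tendsto_g_integral (hs : s ∈ Ioo (0:ℝ) 1) :
    Tendsto (fun ε : ℝ => ∫ z in Ioi ε, gFun s z) (𝓝[>] (0:ℝ))
      (𝓝 (∫ z in Ioi (0:ℝ), gFun s z)) := by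
  have hgi := integrableOn_g hs
  have hIcc : IntegrableOn (gFun s) (uIcc (0:ℝ) 1) := by
    rw [uIcc_of_le (by norm_num : (0:ℝ) ≤ 1)]
    exact (integrableOn_Icc_iff_integrableOn_Ioc).2 (integrableOn_g_Ioc hs)
  have hcont : ContinuousOn (fun x => ∫ t in (0:ℝ)..x, gFun s t) (uIcc (0:ℝ) 1) :=
    intervalIntegral.continuousOn_primitive_interval hIcc
  have h0 : Tendsto (fun x => ∫ t in (0:ℝ)..x, gFun s t) (𝓝[>] (0:ℝ)) (𝓝 0) := by
    have hmem : (0:ℝ) ∈ uIcc (0:ℝ) 1 := left_mem_uIcc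
    have htd := (hcont 0 hmem).tendsto
    rw [intervalIntegral.integral_same] at htd
    have hle : 𝓝[>] (0:ℝ) ≤ 𝓝[uIcc (0:ℝ) 1] (0:ℝ) := by
      rw [← nhdsWithin_Ioc_eq_nhdsGT (one_pos : (0:ℝ) < 1)]
      apply nhdsWithin_mono
      rw [uIcc_of_le (by norm_num : (0:ℝ) ≤ 1)]
      exact Ioc_subset_Icc_self
    exact htd.mono_left hle
  have heq : ∀ᶠ ε in 𝓝[>] (0:ℝ),
      (∫ z in Ioi (0:ℝ), gFun s z) - ∫ t in (0:ℝ)..ε, gFun s t = ∫ z in Ioi ε, gFun s z := by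
    filter_upwards [Ioo_mem_nhdsGT_of_mem (left_mem_Ico.2 one_pos)] with ε hε
    have hsplit : ∫ z in Ioi (0:ℝ), gFun s z =
        (∫ z in Ioc 0 ε, gFun s z) + ∫ z in Ioi ε, gFun s z := by
      rw [← setIntegral_union (Ioc_disjoint_Ioi le_rfl) measurableSet_Ioi
        (hgi.mono_set Ioc_subset_Ioi_self) (hgi.mono_set (Ioi_subset_Ioi hε.1.le)),
        Ioc_union_Ioi_eq_Ioi hε.1.le]
    rw [intervalIntegral.integral_of_le hε.1.le]
    linarith
  have := (tendsto_const_nhds (x := ∫ z in Ioi (0:ℝ), gFun s z)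
    (f := 𝓝[>] (0:ℝ))).sub h0
  rw [sub_zero] at this
  exact Tendsto.congr' heq this

lemma tendsto_main (hs : s ∈ Ioo (0:ℝ) 1) :
    Tendsto (fun ε : ℝ => ∫ z in {z : ℝ | ε < |z|}, fFun s z) (𝓝[>] (0:ℝ))
      (𝓝 (∫ z in Ioi (0:ℝ), gFun s z)) := by
  apply (tendsto_g_integral hs).congr'
  filter_upwards [self_mem_nhdsWithin] with ε hε
  exact (split_integral hs hε).symm

lemma limUnder_eq (hs : s ∈ Ioo (0:ℝ) 1) :
    limUnder (𝓝[>] (0:ℝ)) (fun ε : ℝ => ∫ z in {z : ℝ | ε < |z|}, fFun s z) =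
      ∫ z in Ioi (0:ℝ), gFun s z :=
  (tendsto_main hs).limUnder_eq

lemma csConst_eq (hs : s ∈ Ioo (0:ℝ) 1) :
    csConst s = 2 ^ (1 + 2 * s) * C1s s * ∫ z in Ioi (0:ℝ), gFun s z := by
  have h : csConst s = 2 ^ (1 + 2 * s) * C1s s *
      limUnder (𝓝[>] (0:ℝ)) (fun ε : ℝ => ∫ z in {z : ℝ | ε < |z|}, fFun s z) := rfl
  rw [h, limUnder_eq hs]

lemma gFun_pos (h : s < 1 / 2) {z : ℝ} (hz : 0 < z) : 0 < gFun s z := by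
  unfold gFun
  apply div_pos
  · apply mul_pos (by positivity)
    exact Real.sinh_pos_iff.2 (by nlinarith)
  · apply Real.rpow_pos_of_pos
    exact abs_pos.2 (ne_of_gt (Real.sinh_pos_iff.2 (by positivity)))

lemma gFun_neg' (h : 1 / 2 < s) {z : ℝ} (hz : 0 < z) : gFun s z < 0 := by
  unfold gFun
  apply div_neg_of_neg_of_pos
  · apply mul_neg_of_pos_of_neg (by positivity)
    exact Real.sinh_neg_iff.2 (by nlinarith)
  · apply Real.rpow_pos_of_pos
    exact abs_pos.2 (ne_of_gt (Real.sinh_pos_iff.2 (by positivity)))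

lemma integral_g_pos (hs : s ∈ Ioo (0:ℝ) 1) (h : s < 1 / 2) :
    0 < ∫ z in Ioi (0:ℝ), gFun s z := by
  rw [setIntegral_pos_iff_support_of_nonneg_ae]
  · have hsub : Ioi (0:ℝ) ⊆ Function.support (gFun s) ∩ Ioi 0 := fun z hz =>
      ⟨ne_of_gt (gFun_pos h hz), hz⟩
    calc (0:ENNReal) < volume (Ioi (0:ℝ)) := by rw [Real.volume_Ioi]; exact ENNReal.zero_lt_top
      _ ≤ volume (Function.support (gFun s) ∩ Ioi 0) := measure_mono hsub
  · filter_upwards [ae_restrict_mem measurableSet_Ioi] with z hz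
    exact (gFun_pos h hz).le
  · exact integrableOn_g hs

lemma integral_g_neg (hs : s ∈ Ioo (0:ℝ) 1) (h : 1 / 2 < s) :
    (∫ z in Ioi (0:ℝ), gFun s z) < 0 := by
  have hpos : 0 < ∫ z in Ioi (0:ℝ), -gFun s z := by
    rw [setIntegral_pos_iff_support_of_nonneg_ae]
    · have hsub : Ioi (0:ℝ) ⊆ Function.support (fun z => -gFun s z) ∩ Ioi 0 := fun z hz =>
        ⟨ne_of_gt (neg_pos.2 (gFun_neg' h hz)), hz⟩
      calc (0:ENNReal) < volume (Ioi (0:ℝ)) := by rw [Real.volume_Ioi]; exact ENNReal.zero_lt_top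
        _ ≤ volume (Function.support (fun z => -gFun s z) ∩ Ioi 0) := measure_mono hsub
    · filter_upwards [ae_restrict_mem measurableSet_Ioi] with z hz
      exact (neg_pos.2 (gFun_neg' h hz)).le
    · exact (integrableOn_g hs).neg
  rw [integral_neg] at hpos
  linarith

lemma gFun_half : gFun (1/2 : ℝ) = fun _ => 0 := by
  funext z
  unfold gFun
  norm_num

lemma prefactor_pos (hs : s ∈ Ioo (0:ℝ) 1) : 0 < 2 ^ (1 + 2 * s) * C1s s := by
  apply mul_pos (Real.rpow_pos_of_pos (by norm_num) _)
  unfold C1s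
  have h1 : (0:ℝ) < (4:ℝ) ^ s := Real.rpow_pos_of_pos (by norm_num) _
  have h2 : 0 < Real.Gamma ((1:ℝ) / 2 + s) := Real.Gamma_pos_of_pos (by linarith [hs.1])
  have h3 : (0:ℝ) < Real.pi ^ ((1:ℝ) / 2) := Real.rpow_pos_of_pos Real.pi_pos _
  have h4 : Real.Gamma (-s) ≠ 0 := by
    apply Real.Gamma_ne_zero
    intro m hm
    rcases m with _ | m
    · simp at hm; linarith [hs.1]
    · push_cast at hm
      have : s = (m:ℝ) + 1 := by linarith
      have hm0 : (0:ℝ) ≤ (m:ℝ) := Nat.cast_nonneg m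
      linarith [hs.2]
  exact div_pos (mul_pos h1 h2) (mul_pos h3 (abs_pos.2 h4))

end CsAux

open CsAux in
/-- Sign of the constant `c_s`. -/
theorem csConst_sign (s : ℝ) (hs : s ∈ Set.Ioo (0 : ℝ) 1) :
    (s < 1 / 2 → 0 < csConst s) ∧
    csConst (1 / 2) = 0 ∧
    (1 / 2 < s → csConst s < 0) := by
  refine ⟨fun h => ?_, ?_, fun h => ?_⟩
  · rw [csConst_eq hs]
    exact mul_pos (prefactor_pos hs) (integral_g_pos hs h)
  · have hs' : (1/2 : ℝ) ∈ Set.Ioo (0:ℝ) 1 := by norm_num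
    rw [csConst_eq hs', gFun_half]
    simp
  · rw [csConst_eq hs]
    exact mul_neg_of_pos_of_neg (prefactor_pos hs) (integral_g_neg hs h)

end
end

section
/- Let N ≥ 2 and s ∈ (1/2, 1). There exist C > 0 and ρ₀ ∈ (0,1) such that for every ρ ∈ (0, ρ₀), ∫_{{y′ ∈ ℝ^{N−1} : |y′| ≥ 1/ρ}} ∫_{−1}^{+∞} |log(1+t)| · |(t,y′)|^{−(N+2s)} dt dy′ ≤ C ρ^{s} |log ρ|. -/
open Filter MeasureTheory Metric Set Topology

noncomputable section

/-- Euclidean space ℝ^N. -/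
abbrev EucN (N : ℕ) := EuclideanSpace ℝ (Fin N)

/-- The standard normalizing constant of the fractional Laplacian on ℝ^N. -/
noncomputable def CNs (N : ℕ) (s : ℝ) : ℝ :=
  4 ^ s * Real.Gamma ((N : ℝ) / 2 + s) / (Real.pi ^ ((N : ℝ) / 2) * |Real.Gamma (-s)|)

/-- Distance to the boundary of `Ω`. -/
noncomputable def bdist {N : ℕ} (Ω : Set (EucN N)) (x : EucN N) : ℝ :=
  Metric.infDist x (frontier Ω)

/-- The set `Ω_δ = {x ∈ Ω : d(x) > δ}`. -/
def innerSet {N : ℕ} (Ω : Set (EucN N)) (δ : ℝ) : Set (EucN N) :=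
  {x ∈ Ω | δ < bdist Ω x}

/-- The filter of points of `Ω` whose distance to `∂Ω` tends to `0⁺`. -/
def toBoundary {N : ℕ} (Ω : Set (EucN N)) : Filter (EucN N) :=
  Filter.comap (bdist Ω) (nhdsWithin 0 (Set.Ioi 0)) ⊓ Filter.principal Ω

/-- Principal value of `∫_A F` with singularity at `x₀` converging to `L`. -/
def HasPVAt {N : ℕ} (A : Set (EucN N)) (x₀ : EucN N) (F : EucN N → ℝ) (L : ℝ) : Prop :=
  Tendsto (fun ε : ℝ => ∫ z in A \ Metric.ball x₀ ε, F z) (nhdsWithin 0 (Set.Ioi 0)) (nhds L)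

/-- The principal value of `∫_A F` with singularity at `x₀` (junk value if divergent). -/
noncomputable def pvAt {N : ℕ} (A : Set (EucN N)) (x₀ : EucN N) (F : EucN N → ℝ) : ℝ :=
  limUnder (nhdsWithin (0 : ℝ) (Set.Ioi 0))
    (fun ε : ℝ => ∫ z in A \ Metric.ball x₀ ε, F z)

/-- The kernel `z ↦ (u z − u x)/|x − z|^{N+2s}`. -/
noncomputable def csKernel {N : ℕ} (s : ℝ) (u : EucN N → ℝ) (x z : EucN N) : ℝ :=
  (u z - u x) / dist x z ^ ((N : ℝ) + 2 * s)

/-- The censored fractional Laplacian `(−Δ)_Ω^s u (x)`. -/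
noncomputable def censoredLap {N : ℕ} (Ω : Set (EucN N)) (s : ℝ) (u : EucN N → ℝ)
    (x : EucN N) : ℝ :=
  -CNs N s * pvAt Ω x (csKernel s u x)

/-- The principal value defining `(−Δ)_Ω^s u (x)` converges. -/
def CensoredLapDefined {N : ℕ} (Ω : Set (EucN N)) (s : ℝ) (u : EucN N → ℝ)
    (x : EucN N) : Prop :=
  ∃ L : ℝ, HasPVAt Ω x (csKernel s u x) L

/-- `Ω` has `C²` boundary: local level-set description by `C²` defining functions. -/
def HasC2Boundary {N : ℕ} (Ω : Set (EucN N)) : Prop :=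
  ∀ x ∈ frontier Ω, ∃ (U : Set (EucN N)) (φ : EucN N → ℝ),
    IsOpen U ∧ x ∈ U ∧ ContDiffOn ℝ 2 φ U ∧ (∀ y ∈ U, fderiv ℝ φ y ≠ 0) ∧
    Ω ∩ U = {y ∈ U | φ y < 0} ∧ frontier Ω ∩ U = {y ∈ U | φ y = 0}

/-- Bounded domain with `C²` boundary. -/
def IsBoundedC2Domain {N : ℕ} (Ω : Set (EucN N)) : Prop :=
  IsOpen Ω ∧ IsConnected Ω ∧ Bornology.IsBounded Ω ∧ HasC2Boundary Ω

/-- Evaluation of the censored operator on a test function `φ` near `x₀` and on `u` far away. -/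
noncomputable def testEval {N : ℕ} (Ω : Set (EucN N)) (s : ℝ) (u φ : EucN N → ℝ)
    (x₀ : EucN N) (r : ℝ) : ℝ :=
  -CNs N s * (pvAt (Metric.ball x₀ r) x₀ (csKernel s φ x₀)
    + ∫ z in Ω \ Metric.ball x₀ r, csKernel s u x₀ z)

/-- Viscosity subsolution of `lam·u + (−Δ)_Ω^s u + T·|Du|^m = f` in `Ω'`. -/
def IsViscositySubsol {N : ℕ} (Ω Ω' : Set (EucN N)) (s lam T mexp : ℝ)
    (f u : EucN N → ℝ) : Prop :=
  ∀ x₀ ∈ Ω', ∀ r : ℝ, 0 < r → Metric.ball x₀ r ⊆ Ω' →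
    ∀ φ : EucN N → ℝ, ContDiffOn ℝ 2 φ (Metric.ball x₀ r) →
      φ x₀ = u x₀ → (∀ y ∈ Metric.ball x₀ r, u y ≤ φ y) →
      lam * u x₀ + testEval Ω s u φ x₀ r + T * ‖fderiv ℝ φ x₀‖ ^ mexp ≤ f x₀

/-- Viscosity supersolution of `lam·u + (−Δ)_Ω^s u + T·|Du|^m = f` in `Ω'`. -/
def IsViscositySupersol {N : ℕ} (Ω Ω' : Set (EucN N)) (s lam T mexp : ℝ)
    (f u : EucN N → ℝ) : Prop :=
  ∀ x₀ ∈ Ω', ∀ r : ℝ, 0 < r → Metric.ball x₀ r ⊆ Ω' →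
    ∀ φ : EucN N → ℝ, ContDiffOn ℝ 2 φ (Metric.ball x₀ r) →
      φ x₀ = u x₀ → (∀ y ∈ Metric.ball x₀ r, φ y ≤ u y) →
      f x₀ ≤ lam * u x₀ + testEval Ω s u φ x₀ r + T * ‖fderiv ℝ φ x₀‖ ^ mexp

/-- Viscosity solution. -/
def IsViscositySol {N : ℕ} (Ω Ω' : Set (EucN N)) (s lam T mexp : ℝ)
    (f u : EucN N → ℝ) : Prop :=
  IsViscositySubsol Ω Ω' s lam T mexp f u ∧ IsViscositySupersol Ω Ω' s lam T mexp f u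

/-- Strict viscosity subsolution. -/
def IsStrictViscositySubsol {N : ℕ} (Ω Ω' : Set (EucN N)) (s lam T mexp : ℝ)
    (f u : EucN N → ℝ) : Prop :=
  ∀ x₀ ∈ Ω', ∀ r : ℝ, 0 < r → Metric.ball x₀ r ⊆ Ω' →
    ∀ φ : EucN N → ℝ, ContDiffOn ℝ 2 φ (Metric.ball x₀ r) →
      φ x₀ = u x₀ → (∀ y ∈ Metric.ball x₀ r, u y ≤ φ y) →
      lam * u x₀ + testEval Ω s u φ x₀ r + T * ‖fderiv ℝ φ x₀‖ ^ mexp < f x₀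

/-- Strict viscosity supersolution. -/
def IsStrictViscositySupersol {N : ℕ} (Ω Ω' : Set (EucN N)) (s lam T mexp : ℝ)
    (f u : EucN N → ℝ) : Prop :=
  ∀ x₀ ∈ Ω', ∀ r : ℝ, 0 < r → Metric.ball x₀ r ⊆ Ω' →
    ∀ φ : EucN N → ℝ, ContDiffOn ℝ 2 φ (Metric.ball x₀ r) →
      φ x₀ = u x₀ → (∀ y ∈ Metric.ball x₀ r, φ y ≤ u y) →
      f x₀ < lam * u x₀ + testEval Ω s u φ x₀ r + T * ‖fderiv ℝ φ x₀‖ ^ mexp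

/-- Local Hölder regularity of order `θ ∈ (k, k+1]`: `u ∈ C^{k,θ−k}_loc(Ω)`. -/
def CHolderLoc {N : ℕ} (θ : ℝ) (Ω : Set (EucN N)) (u : EucN N → ℝ) : Prop :=
  ∃ k : ℕ, (k : ℝ) < θ ∧ θ ≤ (k : ℝ) + 1 ∧ ContDiffOn ℝ k u Ω ∧
    ∀ K : Set (EucN N), IsCompact K → K ⊆ Ω → ∃ C > 0, ∀ x ∈ K, ∀ y ∈ K,
      ‖iteratedFDerivWithin ℝ k u Ω x - iteratedFDerivWithin ℝ k u Ω y‖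
        ≤ C * dist x y ^ (θ - k)

/-- `f` is locally Hölder continuous in `Ω`. -/
def LocHolder {N : ℕ} (Ω : Set (EucN N)) (f : EucN N → ℝ) : Prop :=
  ∃ θ : ℝ, θ ∈ Set.Ioc (0 : ℝ) 1 ∧ ∀ K : Set (EucN N), IsCompact K → K ⊆ Ω →
    ∃ C > 0, ∀ x ∈ K, ∀ y ∈ K, |f x - f y| ≤ C * dist x y ^ θ

/-- The boundary profile `g_γ`. -/
noncomputable def ggam {N : ℕ} (Ω : Set (EucN N)) (γ : ℝ) (x : EucN N) : ℝ :=
  if 0 < γ then bdist Ω x ^ (-γ) else -Real.log (bdist Ω x)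

/-- `v` is in the `γ`-class: `−∞ < liminf v/g_γ ≤ limsup v/g_γ < +∞` at `∂Ω`. -/
def InGammaClass {N : ℕ} (Ω : Set (EucN N)) (γ : ℝ) (v : EucN N → ℝ) : Prop :=
  (∃ a : ℝ, ∀ᶠ x in toBoundary Ω, a ≤ v x / ggam Ω γ x) ∧
  (∃ b : ℝ, ∀ᶠ x in toBoundary Ω, v x / ggam Ω γ x ≤ b)

/-- `u` blows up at `∂Ω`. -/
def BlowsUp {N : ℕ} (Ω : Set (EucN N)) (u : EucN N → ℝ) : Prop :=
  Tendsto u (toBoundary Ω) atTop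

/-- The assumption `d(x)^{γ+2s} f(x) → C₁` as `d(x) → 0⁺`. -/
def BoundaryRate {N : ℕ} (Ω : Set (EucN N)) (s γ : ℝ) (f : EucN N → ℝ) (C₁ : ℝ) : Prop :=
  Tendsto (fun x => bdist Ω x ^ (γ + 2 * s) * f x) (toBoundary Ω) (nhds C₁)

/-- The constant `c(N,s,β)`, a principal value over `{(t,y') : t > −1}`. -/
noncomputable def cBeta (N : ℕ) [NeZero N] (s β : ℝ) : ℝ :=
  CNs N s * pvAt {w : EucN N | -1 < w 0} 0
    (fun w => ((1 + w 0) ^ β - 1) / ‖w‖ ^ ((N : ℝ) + 2 * s))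

/-- The constant `c(N,s)` of the logarithmic barrier. -/
noncomputable def cLog (N : ℕ) [NeZero N] (s : ℝ) : ℝ :=
  CNs N s * pvAt {w : EucN N | -1 < w 0} 0
    (fun w => Real.log (1 + w 0) / ‖w‖ ^ ((N : ℝ) + 2 * s))

/-- `C₀` is a positive root of the equation defining the main blow-up constant. -/
def IsBlowUpConstant (N : ℕ) [NeZero N] (s m γ C₁ C₀ : ℝ) : Prop :=
  0 < C₀ ∧
  (m < 2 * s → -C₀ * cBeta N s γ + γ ^ m * C₀ ^ m - C₁ = 0) ∧
  (m = 2 * s → -C₀ * cLog N s + C₀ ^ (2 * s) - C₁ = 0)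

/-- Minimal large (blow-up) viscosity solution of `lam·u + (−Δ)_Ω^s u + |Du|^m = f` in `Ω`. -/
def IsMinimalLargeSol {N : ℕ} (Ω : Set (EucN N)) (s lam mexp : ℝ)
    (f u : EucN N → ℝ) : Prop :=
  ContinuousOn u Ω ∧ IsViscositySol Ω Ω s lam 1 mexp f u ∧ BlowsUp Ω u ∧
  ∀ v : EucN N → ℝ, ContinuousOn v Ω → IsViscositySol Ω Ω s lam 1 mexp f v →
    BlowsUp Ω v → ∀ x ∈ Ω, u x ≤ v x

/-- Euclidean norm of the component of `w` orthogonal to the first coordinate axis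
(i.e. `|y′|` when `w = (t, y′)`). -/
noncomputable def ortho0Norm {N : ℕ} [NeZero N] (w : EucN N) : ℝ :=
  Real.sqrt (‖w‖ ^ 2 - (w 0) ^ 2)


section TailEstimateAux

open Real ENNReal

private lemma eucn_abs_coord_le_norm {k : ℕ} (w : EucN k) (i : Fin k) : |w i| ≤ ‖w‖ := by
  rw [EuclideanSpace.norm_eq, ← Real.sqrt_sq_eq_abs]
  simp only [Real.norm_eq_abs, sq_abs]
  exact Real.sqrt_le_sqrt
    (Finset.single_le_sum (f := fun j => w j ^ 2) (fun j _ => sq_nonneg _) (Finset.mem_univ i))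

private lemma ortho0Norm_eq (n : ℕ) (w : EucN (n + 1)) :
    ortho0Norm w = Real.sqrt (∑ j : Fin n, w j.succ ^ 2) := by
  have h : ‖w‖ ^ 2 = ∑ i : Fin (n + 1), w i ^ 2 := by
    rw [EuclideanSpace.norm_eq]
    simp only [Real.norm_eq_abs, sq_abs]
    rw [Real.sq_sqrt (Finset.sum_nonneg fun i _ => sq_nonneg _)]
  rw [ortho0Norm, h, Fin.sum_univ_succ, add_sub_cancel_left]

private lemma ortho0Norm_le_norm {n : ℕ} [NeZero n] (w : EucN n) : ortho0Norm w ≤ ‖w‖ := by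
  rw [ortho0Norm]
  calc Real.sqrt (‖w‖ ^ 2 - w 0 ^ 2) ≤ Real.sqrt (‖w‖ ^ 2) :=
        Real.sqrt_le_sqrt (by nlinarith [sq_nonneg (w 0)])
    _ = ‖w‖ := Real.sqrt_sq (norm_nonneg w)

private lemma tail_lintegral_lt_top (k : ℕ) (c α : ℝ) (hα : (k : ℝ) < α) (hc : 0 ≤ c) :
    (∫⁻ y : EucN k, (if 1 ≤ ‖y‖ then ENNReal.ofReal (c * ‖y‖ ^ (-α)) else 0)) < ∞ := by
  have hα0 : 0 < α := lt_of_le_of_lt (Nat.cast_nonneg k) hα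
  have hmeas : MeasurableSet {y : EucN k | 1 ≤ ‖y‖} :=
    measurableSet_le measurable_const measurable_norm
  have heq : (fun y : EucN k => if 1 ≤ ‖y‖ then ENNReal.ofReal (c * ‖y‖ ^ (-α)) else 0)
      = {y : EucN k | 1 ≤ ‖y‖}.indicator (fun y => ENNReal.ofReal (c * ‖y‖ ^ (-α))) := by
    ext y
    simp [Set.indicator_apply, Set.mem_setOf_eq]
  rw [heq, lintegral_indicator hmeas]
  apply MeasureTheory.IntegrableOn.setLIntegral_lt_top
  have hbase : MeasureTheory.Integrable (fun y : EucN k => (c * 2 ^ α) * (1 + ‖y‖) ^ (-α)) :=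
    (integrable_one_add_norm
      (by rw [finrank_euclideanSpace_fin]; exact hα)).const_mul _
  refine MeasureTheory.Integrable.mono' hbase.integrableOn ?_ ?_
  · exact (Measurable.aestronglyMeasurable (by fun_prop))
  · rw [MeasureTheory.ae_restrict_iff' hmeas]
    filter_upwards with y hy
    have h1 : (0 : ℝ) < ‖y‖ := lt_of_lt_of_le one_pos hy
    have h3 : ‖y‖ ^ (-α) ≤ ((1 + ‖y‖) / 2) ^ (-α) :=
      Real.rpow_le_rpow_of_nonpos (by linarith) (by linarith) (by linarith)
    have h4 : ((1 + ‖y‖) / 2 : ℝ) ^ (-α) = 2 ^ α * (1 + ‖y‖) ^ (-α) := by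
      rw [Real.div_rpow (by linarith) (by norm_num),
        Real.rpow_neg (by norm_num : (0:ℝ) ≤ 2)]
      field_simp
    calc ‖c * ‖y‖ ^ (-α)‖ = c * ‖y‖ ^ (-α) := by
          rw [Real.norm_eq_abs, abs_of_nonneg (by positivity)]
      _ ≤ c * (2 ^ α * (1 + ‖y‖) ^ (-α)) := by
          rw [← h4]; exact mul_le_mul_of_nonneg_left h3 hc
      _ = c * 2 ^ α * (1 + ‖y‖) ^ (-α) := by ring

private lemma oneD_integrable :
    MeasureTheory.IntegrableOn (fun t : ℝ => 2 * (1 + t) ^ (-(1/2) : ℝ))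
      (Set.Ioo (-1 : ℝ) 0) := by
  have h := (intervalIntegral.intervalIntegrable_rpow' (a := 0) (b := 1)
    (r := (-(1/2) : ℝ)) (by norm_num)).comp_add_right 1
  have h2 : MeasureTheory.IntegrableOn (fun x : ℝ => (x + 1) ^ (-(1/2) : ℝ))
      (Set.Ioc (-1 : ℝ) 0) := by
    have := h.1
    norm_num at this
    exact this
  have h3 := (h2.mono_set Set.Ioo_subset_Ioc_self).const_mul (2 : ℝ)
  have heq : (fun t : ℝ => 2 * (1 + t) ^ (-(1/2) : ℝ))
      = fun x : ℝ => 2 * (x + 1) ^ (-(1/2) : ℝ) := by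
    funext x; rw [add_comm]
  rw [MeasureTheory.IntegrableOn, heq]
  exact h3

end TailEstimateAux


private noncomputable def auxF1 : ℝ → ENNReal := fun t =>
  if t ∈ Set.Ioo (-1 : ℝ) 0 then ENNReal.ofReal (2 * (1 + t) ^ (-(1/2) : ℝ)) else 0

private noncomputable def auxF2 (β : ℝ) : ℝ → ENNReal := fun r =>
  if 1 ≤ r then ENNReal.ofReal (r ^ (-β)) else 0

private lemma measurable_auxF1 : Measurable auxF1 :=
  Measurable.ite measurableSet_Ioo (by fun_prop) measurable_const

private lemma measurable_auxF2 (β : ℝ) : Measurable (auxF2 β) :=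
  Measurable.ite (measurableSet_le measurable_const measurable_id) (by fun_prop) measurable_const

private lemma lintegral_auxF1_lt_top : (∫⁻ t : ℝ, auxF1 t) < ⊤ := by
  have heq : auxF1 = (Set.Ioo (-1 : ℝ) 0).indicator
      (fun t => ENNReal.ofReal (2 * (1 + t) ^ (-(1/2) : ℝ))) := by
    ext t; simp [auxF1, Set.indicator_apply]
  rw [heq, MeasureTheory.lintegral_indicator measurableSet_Ioo]
  exact oneD_integrable.setLIntegral_lt_top

private lemma lintegral_auxF2_lt_top (k : ℕ) (β : ℝ) (hβ : (k : ℝ) < β) :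
    (∫⁻ y : EucN k, auxF2 β ‖y‖) < ⊤ := by
  have heq : (fun y : EucN k => auxF2 β ‖y‖)
      = fun y : EucN k => if 1 ≤ ‖y‖ then ENNReal.ofReal (1 * ‖y‖ ^ (-β)) else 0 := by
    ext y; simp [auxF2]
  rw [heq]
  exact tail_lintegral_lt_top k 1 β hβ zero_le_one

private lemma fubini_aux (n : ℕ) (β : ℝ) :
    (∫⁻ v : EucN (n + 1), auxF1 (v 0) * auxF2 β (ortho0Norm v))
      = (∫⁻ t : ℝ, auxF1 t) * (∫⁻ y : EucN n, auxF2 β ‖y‖) := by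
  have hsum : Measurable fun z : Fin n → ℝ => Real.sqrt (∑ j : Fin n, z j ^ 2) :=
    Real.continuous_sqrt.measurable.comp
      (Finset.measurable_sum Finset.univ fun j _ => (measurable_pi_apply j).pow_const 2)
  have hg3 : Measurable fun z : Fin n → ℝ => auxF2 β (Real.sqrt (∑ j : Fin n, z j ^ 2)) :=
    (measurable_auxF2 β).comp hsum
  calc (∫⁻ v : EucN (n + 1), auxF1 (v 0) * auxF2 β (ortho0Norm v))
      = ∫⁻ v : EucN (n + 1),
          (fun x : Fin (n + 1) → ℝ =>
            auxF1 (x 0) * auxF2 β (Real.sqrt (∑ j : Fin n, x j.succ ^ 2)))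
          (((MeasurableEquiv.toLp 2 (Fin (n + 1) → ℝ)).symm) v) := by
        apply MeasureTheory.lintegral_congr; intro v
        rw [ortho0Norm_eq n v]
        rfl
    _ = ∫⁻ x : Fin (n + 1) → ℝ,
          auxF1 (x 0) * auxF2 β (Real.sqrt (∑ j : Fin n, x j.succ ^ 2)) := by
        have hemb := ((MeasurableEquiv.toLp 2 (Fin (n + 1) → ℝ)).symm).measurableEmbedding
        exact MeasurePreserving.lintegral_comp_emb
          (EuclideanSpace.volume_preserving_symm_measurableEquiv_toLp (Fin (n + 1)))
          hemb
          (fun x => auxF1 (x 0) * auxF2 β (Real.sqrt (∑ j : Fin n, x j.succ ^ 2)))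
    _ = ∫⁻ x : Fin (n + 1) → ℝ,
          (fun p : ℝ × (Fin n → ℝ) =>
            auxF1 p.1 * auxF2 β (Real.sqrt (∑ j : Fin n, p.2 j ^ 2)))
          ((MeasurableEquiv.piFinSuccAbove (fun _ : Fin (n + 1) => ℝ) 0) x) := by
        apply MeasureTheory.lintegral_congr; intro x
        simp [MeasurableEquiv.piFinSuccAbove, Fin.succAbove_zero, Fin.removeNth, Fin.tail]
    _ = ∫⁻ p : ℝ × (Fin n → ℝ),
          auxF1 p.1 * auxF2 β (Real.sqrt (∑ j : Fin n, p.2 j ^ 2)) := by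
        have hemb := (MeasurableEquiv.piFinSuccAbove
          (fun _ : Fin (n + 1) => ℝ) 0).measurableEmbedding
        exact MeasurePreserving.lintegral_comp_emb
          (MeasureTheory.volume_preserving_piFinSuccAbove (fun _ : Fin (n + 1) => ℝ) 0)
          hemb
          (fun p => auxF1 p.1 * auxF2 β (Real.sqrt (∑ j : Fin n, p.2 j ^ 2)))
    _ = (∫⁻ t : ℝ, auxF1 t)
          * (∫⁻ z : Fin n → ℝ, auxF2 β (Real.sqrt (∑ j : Fin n, z j ^ 2))) := by
        rw [MeasureTheory.Measure.volume_eq_prod]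
        exact MeasureTheory.lintegral_prod_mul measurable_auxF1.aemeasurable hg3.aemeasurable
    _ = (∫⁻ t : ℝ, auxF1 t) * (∫⁻ y : EucN n, auxF2 β ‖y‖) := by
        congr 1
        rw [← (EuclideanSpace.volume_preserving_symm_measurableEquiv_toLp
            (Fin n)).lintegral_comp_emb
            (MeasurableEquiv.toLp 2 (Fin n → ℝ)).symm.measurableEmbedding
            (fun z : Fin n → ℝ => auxF2 β (Real.sqrt (∑ j : Fin n, z j ^ 2)))]
        apply MeasureTheory.lintegral_congr; intro y
        congr 1
        rw [EuclideanSpace.norm_eq]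
        simp [Real.norm_eq_abs, sq_abs, MeasurableEquiv.toLp_symm_apply,
          WithLp.ofLp]

/-- Tail estimate of the logarithmic kernel integral. -/
theorem log_kernel_tail_estimate
    (N : ℕ) [NeZero N] (hN : 2 ≤ N) (s : ℝ) (hs : s ∈ Set.Ioo (1 / 2 : ℝ) 1) :
    ∃ C > (0 : ℝ), ∃ ρ₀ ∈ Set.Ioo (0 : ℝ) 1, ∀ ρ ∈ Set.Ioo (0 : ℝ) ρ₀,
      (∫ w in {w : EucN N | -1 < w 0 ∧ 1 / ρ ≤ ortho0Norm w},
          |Real.log (1 + w 0)| * ‖w‖ ^ (-((N : ℝ) + 2 * s)))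
        ≤ C * ρ ^ s * |Real.log ρ| := by
  obtain ⟨hs1, hs2⟩ := hs
  have hs0 : 0 < s := lt_trans (by norm_num) hs1
  obtain ⟨n, rfl⟩ : ∃ n, N = n + 1 := ⟨N - 1, by omega⟩
  set b : ℝ := ((n + 1 : ℕ) : ℝ) with hbdef
  have hb0 : 0 ≤ b := Nat.cast_nonneg _
  set K : ℝ := 1 + 2 / s with hKdef
  have hK0 : 0 < K := by positivity
  have hL1 : (∫⁻ v : EucN (n + 1),
      (if 1 ≤ ‖v‖ then ENNReal.ofReal (K * ‖v‖ ^ (-(b + s / 2))) else 0)) < ⊤ :=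
    tail_lintegral_lt_top (n + 1) K (b + s / 2) (by rw [hbdef]; linarith) hK0.le
  have hL2a := lintegral_auxF1_lt_top
  have hL2b : (∫⁻ y : EucN n, auxF2 (b + s) ‖y‖) < ⊤ :=
    lintegral_auxF2_lt_top n (b + s) (by rw [hbdef]; push_cast; linarith)
  set L : ENNReal := (∫⁻ v : EucN (n + 1),
      (if 1 ≤ ‖v‖ then ENNReal.ofReal (K * ‖v‖ ^ (-(b + s / 2))) else 0))
      + (∫⁻ t : ℝ, auxF1 t) * (∫⁻ y : EucN n, auxF2 (b + s) ‖y‖) with hLdef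
  have hL : L < ⊤ := by
    rw [hLdef]
    exact ENNReal.add_lt_top.mpr ⟨hL1, ENNReal.mul_lt_top hL2a hL2b⟩
  have hCpos : (0 : ℝ) < L.toReal + 1 := by positivity
  refine ⟨L.toReal + 1, hCpos, Real.exp (-1), ⟨Real.exp_pos _, ?_⟩, ?_⟩
  · calc Real.exp (-1) < Real.exp 0 := Real.exp_lt_exp.mpr (by norm_num)
      _ = 1 := Real.exp_zero
  intro ρ hρ
  obtain ⟨hρ0, hρe⟩ := hρ
  have hρ1 : ρ < 1 := by
    calc ρ < Real.exp (-1) := hρe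
      _ < Real.exp 0 := Real.exp_lt_exp.mpr (by norm_num)
      _ = 1 := Real.exp_zero
  have hlogρ : 1 ≤ |Real.log ρ| := by
    have h1 : Real.log ρ < -1 := by
      have h2 := Real.log_le_log hρ0 hρe.le
      rw [Real.log_exp] at h2
      have h3 : Real.log ρ ≠ -1 := by
        intro h
        have : ρ = Real.exp (-1) := by
          rw [← h, Real.exp_log hρ0]
        exact absurd this (ne_of_lt hρe)
      exact lt_of_le_of_ne h2 h3
    rw [abs_of_neg (by linarith)]
    linarith
  have hRgt1 : (1 : ℝ) < 1 / ρ := one_lt_one_div hρ0 hρ1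
  have hρs : 0 ≤ ρ ^ s := Real.rpow_nonneg hρ0.le s
  have hm0 : Measurable fun w : EucN (n + 1) => w 0 :=
    (EuclideanSpace.proj (0 : Fin (n + 1))).continuous.measurable
  have hmortho : Measurable (fun w : EucN (n + 1) => ortho0Norm w) := by
    have : (fun w : EucN (n + 1) => ortho0Norm w)
        = fun w : EucN (n + 1) => Real.sqrt (‖w‖ ^ 2 - w 0 ^ 2) := rfl
    rw [this]
    exact Real.continuous_sqrt.measurable.comp
      ((measurable_norm.pow_const 2).sub (hm0.pow_const 2))
  have hS : MeasurableSet {w : EucN (n + 1) | -1 < w 0 ∧ 1 / ρ ≤ ortho0Norm w} := by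
    rw [Set.setOf_and]
    exact (measurableSet_lt measurable_const hm0).inter
      (measurableSet_le measurable_const hmortho)
  have hmf : Measurable fun w : EucN (n + 1) =>
      |Real.log (1 + w 0)| * ‖w‖ ^ (-(b + 2 * s)) := by
    apply Measurable.mul
    · exact (Real.measurable_log.comp (measurable_const.add hm0)).abs
    · fun_prop
  rw [MeasureTheory.integral_eq_lintegral_of_nonneg_ae
      (Filter.Eventually.of_forall fun w =>
        mul_nonneg (abs_nonneg _) (Real.rpow_nonneg (norm_nonneg _) _))
      hmf.aestronglyMeasurable]
  have hG1meas : Measurable fun v : EucN (n + 1) =>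
      (if 1 ≤ ‖v‖ then ENNReal.ofReal (K * ‖v‖ ^ (-(b + s / 2))) else 0 : ENNReal) :=
    Measurable.ite (measurableSet_le measurable_const measurable_norm) (by fun_prop)
      measurable_const
  have hpow : ∀ x : ℝ, 1 / ρ ≤ x → x ^ (-s) ≤ ρ ^ s := by
    intro x hx
    have h1 : x ^ (-s) ≤ (1 / ρ) ^ (-s) :=
      Real.rpow_le_rpow_of_nonpos (by positivity) hx (by linarith)
    have h2 : ((1 : ℝ) / ρ) ^ (-s) = ρ ^ s := by
      rw [one_div, Real.inv_rpow hρ0.le, Real.rpow_neg hρ0.le, inv_inv]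
    rwa [h2] at h1
  have hkey : (∫⁻ w in {w : EucN (n + 1) | -1 < w 0 ∧ 1 / ρ ≤ ortho0Norm w},
      ENNReal.ofReal (|Real.log (1 + w 0)| * ‖w‖ ^ (-(b + 2 * s))))
      ≤ ENNReal.ofReal (ρ ^ s) * L := by
    have hmono : ∀ w ∈ {w : EucN (n + 1) | -1 < w 0 ∧ 1 / ρ ≤ ortho0Norm w},
        ENNReal.ofReal (|Real.log (1 + w 0)| * ‖w‖ ^ (-(b + 2 * s)))
          ≤ ENNReal.ofReal (ρ ^ s) *
            ((if 1 ≤ ‖w‖ then ENNReal.ofReal (K * ‖w‖ ^ (-(b + s / 2))) else 0)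
              + auxF1 (w 0) * auxF2 (b + s) (ortho0Norm w)) := by
      intro w hw
      obtain ⟨hw1, hw2⟩ := hw
      have ho_pos : 0 < ortho0Norm w := lt_of_lt_of_le (by positivity) hw2
      have ho1 : 1 ≤ ortho0Norm w := le_trans hRgt1.le hw2
      have hle : ortho0Norm w ≤ ‖w‖ := ortho0Norm_le_norm w
      have hw_pos : 0 < ‖w‖ := lt_of_lt_of_le ho_pos hle
      have hw1' : 1 ≤ ‖w‖ := le_trans ho1 hle
      have hwR : 1 / ρ ≤ ‖w‖ := le_trans hw2 hle
      rcases le_or_gt 0 (w 0) with ht | ht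
      · -- nonnegative first coordinate: radial bound
        have hlog : |Real.log (1 + w 0)| ≤ K * ‖w‖ ^ (s / 2) := by
          rw [abs_of_nonneg (Real.log_nonneg (by linarith))]
          have h1w0 : w 0 ≤ ‖w‖ := le_trans (le_abs_self _) (eucn_abs_coord_le_norm w 0)
          have hlog2 : Real.log (1 + w 0) ≤ Real.log (2 * ‖w‖) :=
            Real.log_le_log (by linarith) (by linarith)
          have hsplit : Real.log (2 * ‖w‖) = Real.log 2 + Real.log ‖w‖ :=
            Real.log_mul (by norm_num) (ne_of_gt hw_pos)
          have h2 : Real.log 2 ≤ 1 := by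
            have := Real.log_le_sub_one_of_pos (by norm_num : (0 : ℝ) < 2); linarith
          have h3 : (1 : ℝ) ≤ ‖w‖ ^ (s / 2) := by
            calc (1 : ℝ) = 1 ^ (s / 2) := (Real.one_rpow _).symm
              _ ≤ ‖w‖ ^ (s / 2) := Real.rpow_le_rpow zero_le_one hw1' (by positivity)
          have h4 : Real.log ‖w‖ ≤ (2 / s) * ‖w‖ ^ (s / 2) := by
            have h5 := Real.log_le_rpow_div (norm_nonneg w)
              (show (0 : ℝ) < s / 2 by positivity)
            have heq : ‖w‖ ^ (s / 2) / (s / 2) = (2 / s) * ‖w‖ ^ (s / 2) := by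
              field_simp
            rwa [heq] at h5
          calc Real.log (1 + w 0) ≤ Real.log 2 + Real.log ‖w‖ := by
                rw [← hsplit]; exact hlog2
            _ ≤ 1 * ‖w‖ ^ (s / 2) + (2 / s) * ‖w‖ ^ (s / 2) := by
                have h6 : Real.log 2 ≤ 1 * ‖w‖ ^ (s / 2) := by linarith
                linarith
            _ = K * ‖w‖ ^ (s / 2) := by rw [hKdef]; ring
        have hchain : |Real.log (1 + w 0)| * ‖w‖ ^ (-(b + 2 * s))
            ≤ ρ ^ s * (K * ‖w‖ ^ (-(b + s / 2))) := by
          have hr1 : ‖w‖ ^ (s / 2) * ‖w‖ ^ (-(b + 2 * s))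
              = ‖w‖ ^ (-s) * ‖w‖ ^ (-(b + s / 2)) := by
            rw [← Real.rpow_add hw_pos, ← Real.rpow_add hw_pos]; ring_nf
          calc |Real.log (1 + w 0)| * ‖w‖ ^ (-(b + 2 * s))
              ≤ (K * ‖w‖ ^ (s / 2)) * ‖w‖ ^ (-(b + 2 * s)) :=
                mul_le_mul_of_nonneg_right hlog (Real.rpow_nonneg (norm_nonneg w) _)
            _ = K * (‖w‖ ^ (-s) * ‖w‖ ^ (-(b + s / 2))) := by rw [mul_assoc, hr1]
            _ ≤ K * (ρ ^ s * ‖w‖ ^ (-(b + s / 2))) := by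
                refine mul_le_mul_of_nonneg_left ?_ hK0.le
                exact mul_le_mul_of_nonneg_right (hpow _ hwR)
                  (Real.rpow_nonneg (norm_nonneg w) _)
            _ = ρ ^ s * (K * ‖w‖ ^ (-(b + s / 2))) := by ring
        calc ENNReal.ofReal (|Real.log (1 + w 0)| * ‖w‖ ^ (-(b + 2 * s)))
            ≤ ENNReal.ofReal (ρ ^ s * (K * ‖w‖ ^ (-(b + s / 2)))) :=
              ENNReal.ofReal_le_ofReal hchain
          _ = ENNReal.ofReal (ρ ^ s) * ENNReal.ofReal (K * ‖w‖ ^ (-(b + s / 2))) :=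
              ENNReal.ofReal_mul hρs
          _ ≤ ENNReal.ofReal (ρ ^ s) *
              ((if 1 ≤ ‖w‖ then ENNReal.ofReal (K * ‖w‖ ^ (-(b + s / 2))) else 0)
                + auxF1 (w 0) * auxF2 (b + s) (ortho0Norm w)) := by
              apply mul_le_mul_right
              rw [if_pos hw1']
              exact le_self_add
      · -- negative first coordinate: product bound
        have h1t : 0 < 1 + w 0 := by linarith
        have habs : |Real.log (1 + w 0)| ≤ 2 * (1 + w 0) ^ (-(1/2) : ℝ) := by
          rw [abs_of_nonpos (Real.log_nonpos h1t.le (by linarith))]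
          have h5 := Real.log_le_rpow_div (inv_nonneg.mpr h1t.le) one_half_pos
          rw [Real.log_inv] at h5
          have heq : ((1 + w 0)⁻¹ : ℝ) ^ ((1 : ℝ)/2) = (1 + w 0) ^ (-(1/2) : ℝ) := by
            rw [Real.inv_rpow h1t.le, ← Real.rpow_neg h1t.le]
          rw [heq] at h5
          have harith : (1 + w 0) ^ (-(1/2) : ℝ) / (1/2)
              = 2 * (1 + w 0) ^ (-(1/2) : ℝ) := by ring
          rw [harith] at h5
          linarith
        have hchain : |Real.log (1 + w 0)| * ‖w‖ ^ (-(b + 2 * s))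
            ≤ ρ ^ s * (2 * (1 + w 0) ^ (-(1/2) : ℝ) * ortho0Norm w ^ (-(b + s))) := by
          have ho2 : ‖w‖ ^ (-(b + 2 * s)) ≤ ortho0Norm w ^ (-(b + 2 * s)) :=
            Real.rpow_le_rpow_of_nonpos ho_pos hle (by linarith)
          have hr2 : ortho0Norm w ^ (-(b + 2 * s))
              = ortho0Norm w ^ (-s) * ortho0Norm w ^ (-(b + s)) := by
            rw [← Real.rpow_add ho_pos]; ring_nf
          calc |Real.log (1 + w 0)| * ‖w‖ ^ (-(b + 2 * s))
              ≤ (2 * (1 + w 0) ^ (-(1/2) : ℝ)) * ‖w‖ ^ (-(b + 2 * s)) :=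
                mul_le_mul_of_nonneg_right habs (Real.rpow_nonneg (norm_nonneg w) _)
            _ ≤ (2 * (1 + w 0) ^ (-(1/2) : ℝ)) * ortho0Norm w ^ (-(b + 2 * s)) :=
                mul_le_mul_of_nonneg_left ho2 (by positivity)
            _ = (2 * (1 + w 0) ^ (-(1/2) : ℝ))
                * (ortho0Norm w ^ (-s) * ortho0Norm w ^ (-(b + s))) := by rw [hr2]
            _ ≤ (2 * (1 + w 0) ^ (-(1/2) : ℝ))
                * (ρ ^ s * ortho0Norm w ^ (-(b + s))) := by
                refine mul_le_mul_of_nonneg_left ?_ (by positivity)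
                exact mul_le_mul_of_nonneg_right (hpow _ hw2)
                  (Real.rpow_nonneg ho_pos.le _)
            _ = ρ ^ s * (2 * (1 + w 0) ^ (-(1/2) : ℝ) * ortho0Norm w ^ (-(b + s))) := by
                ring
        calc ENNReal.ofReal (|Real.log (1 + w 0)| * ‖w‖ ^ (-(b + 2 * s)))
            ≤ ENNReal.ofReal
              (ρ ^ s * (2 * (1 + w 0) ^ (-(1/2) : ℝ) * ortho0Norm w ^ (-(b + s)))) :=
              ENNReal.ofReal_le_ofReal hchain
          _ = ENNReal.ofReal (ρ ^ s) * (ENNReal.ofReal (2 * (1 + w 0) ^ (-(1/2) : ℝ))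
              * ENNReal.ofReal (ortho0Norm w ^ (-(b + s)))) := by
              rw [ENNReal.ofReal_mul hρs, ENNReal.ofReal_mul (by positivity)]
          _ = ENNReal.ofReal (ρ ^ s) * (auxF1 (w 0) * auxF2 (b + s) (ortho0Norm w)) := by
              have hmem : w 0 ∈ Set.Ioo (-1 : ℝ) 0 := ⟨hw1, ht⟩
              rw [show auxF1 (w 0) = ENNReal.ofReal (2 * (1 + w 0) ^ (-(1/2) : ℝ)) from
                  if_pos hmem,
                show auxF2 (b + s) (ortho0Norm w)
                    = ENNReal.ofReal (ortho0Norm w ^ (-(b + s))) from if_pos ho1]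
          _ ≤ ENNReal.ofReal (ρ ^ s) *
              ((if 1 ≤ ‖w‖ then ENNReal.ofReal (K * ‖w‖ ^ (-(b + s / 2))) else 0)
                + auxF1 (w 0) * auxF2 (b + s) (ortho0Norm w)) :=
              mul_le_mul_right le_add_self _
    calc (∫⁻ w in {w : EucN (n + 1) | -1 < w 0 ∧ 1 / ρ ≤ ortho0Norm w},
        ENNReal.ofReal (|Real.log (1 + w 0)| * ‖w‖ ^ (-(b + 2 * s))))
        ≤ ∫⁻ w in {w : EucN (n + 1) | -1 < w 0 ∧ 1 / ρ ≤ ortho0Norm w},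
            ENNReal.ofReal (ρ ^ s) *
            ((if 1 ≤ ‖w‖ then ENNReal.ofReal (K * ‖w‖ ^ (-(b + s / 2))) else 0)
              + auxF1 (w 0) * auxF2 (b + s) (ortho0Norm w)) :=
          MeasureTheory.setLIntegral_mono' hS hmono
      _ ≤ ∫⁻ w : EucN (n + 1), ENNReal.ofReal (ρ ^ s) *
            ((if 1 ≤ ‖w‖ then ENNReal.ofReal (K * ‖w‖ ^ (-(b + s / 2))) else 0)
              + auxF1 (w 0) * auxF2 (b + s) (ortho0Norm w)) :=
          MeasureTheory.setLIntegral_le_lintegral _ _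
      _ = ENNReal.ofReal (ρ ^ s) * ∫⁻ w : EucN (n + 1),
            ((if 1 ≤ ‖w‖ then ENNReal.ofReal (K * ‖w‖ ^ (-(b + s / 2))) else 0)
              + auxF1 (w 0) * auxF2 (b + s) (ortho0Norm w)) :=
          MeasureTheory.lintegral_const_mul' _ _ ENNReal.ofReal_ne_top
      _ = ENNReal.ofReal (ρ ^ s) * L := by
          rw [MeasureTheory.lintegral_add_left hG1meas, hLdef, fubini_aux n (b + s)]
  have hfin : ENNReal.ofReal (ρ ^ s) * L ≠ ⊤ :=
    ENNReal.mul_ne_top ENNReal.ofReal_ne_top hL.ne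
  calc (∫⁻ w in {w : EucN (n + 1) | -1 < w 0 ∧ 1 / ρ ≤ ortho0Norm w},
      ENNReal.ofReal (|Real.log (1 + w 0)| * ‖w‖ ^ (-(b + 2 * s)))).toReal
      ≤ (ENNReal.ofReal (ρ ^ s) * L).toReal := ENNReal.toReal_mono hfin hkey
    _ = ρ ^ s * L.toReal := by rw [ENNReal.toReal_mul, ENNReal.toReal_ofReal hρs]
    _ ≤ (L.toReal + 1) * ρ ^ s * |Real.log ρ| := by
        have h1 : 0 ≤ L.toReal := ENNReal.toReal_nonneg
        have h2 : (L.toReal + 1) * ρ ^ s * 1 ≤ (L.toReal + 1) * ρ ^ s * |Real.log ρ| :=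
          mul_le_mul_of_nonneg_left hlogρ (by positivity)
        nlinarith

end
end
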